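/- Let α be a finite set with |α| ≥ 2, let Q be a probability mass function on α with Q(a) > 0 for every a ∈ α, let n ≥ 1 and let ℓ be an integer with 0 ≤ ℓ ≤ n/2. For a set A ⊆ αⁿ, let Â := { yⁿ ∈ αⁿ : ∃ xⁿ ∈ A with d_H(xⁿ, yⁿ) ≤ ℓ } denote its Hamming ℓ-blow-up. Then Q^{⊗n}(Â) ≤ Q^{⊗n}(A) · 2^{n·H_b(ℓ/n)} · |α|^{ℓ} · ( min_{a ∈ α} Q(a) )^{−ℓ}. -/

import Mathlib

/-!
STATEMENT 16: Blow-up bound. For a finite set `α` with `|α| ≥ 2`, a strictly positive pmf `Q`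
on `α`, `n ≥ 1`, an integer `0 ≤ ℓ ≤ n/2`, and a set `A ⊆ αⁿ` with Hamming `ℓ`-blow-up
`Â := {yⁿ : ∃ xⁿ ∈ A, d_H(xⁿ,yⁿ) ≤ ℓ}`:
`Q^{⊗n}(Â) ≤ Q^{⊗n}(A) · 2^{n·H_b(ℓ/n)} · |α|^ℓ · (min_a Q(a))^{-ℓ}`.
-/

open scoped BigOperators Classical

/-- `P` is a probability mass function on the finite set `Z`. -/
def IsPmf {Z : Type*} [Fintype Z] (P : Z → ℝ) : Prop :=
  (∀ z, 0 ≤ P z) ∧ ∑ z, P z = 1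

/-- The `n`-fold product pmf on `Fin n → Z`. -/
noncomputable def prodPmf {Z : Type*} [Fintype Z] (P : Z → ℝ) (n : ℕ) : (Fin n → Z) → ℝ :=
  fun x => ∏ i, P (x i)

/-- Binary entropy function (base-2 logarithm; `H_b 0 = 0` since `logb 2 0 = 0` in Lean). -/
noncomputable def binEnt (p : ℝ) : ℝ :=
  -(p * Real.logb 2 p) - (1 - p) * Real.logb 2 (1 - p)

open Finset Real

/-- Entropy bound on the partial sum of binomial coefficients. -/
lemma sum_choose_le_two_rpow (n ℓ : ℕ) (hn : 1 ≤ n) (hℓ : (ℓ : ℝ) ≤ (n : ℝ) / 2) :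
    ((∑ k ∈ Finset.range (ℓ + 1), n.choose k : ℕ) : ℝ) ≤
      (2 : ℝ) ^ ((n : ℝ) * binEnt ((ℓ : ℝ) / n)) := by
  have hn0 : (0:ℝ) < n := by exact_mod_cast hn
  rcases Nat.eq_zero_or_pos ℓ with rfl | hℓpos
  · norm_num [binEnt]
  set p : ℝ := (ℓ:ℝ)/n with hp
  have hℓn : ℓ ≤ n := by
    have : (ℓ:ℝ) ≤ (n:ℝ) := le_trans hℓ (by linarith)
    exact_mod_cast this
  have hp0 : 0 < p := by positivity
  have hp_half : p ≤ 1/2 := by rw [hp, div_le_div_iff₀ hn0 (by norm_num)]; linarith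
  have h1p : 0 < 1 - p := by linarith
  have hple : p ≤ 1 - p := by linarith
  have hbinom : ∑ k ∈ range (n+1), p ^ k * (1-p) ^ (n-k) * n.choose k = 1 := by
    have h := add_pow p (1-p) n
    have e : p + (1-p) = 1 := by ring
    rw [e, one_pow] at h
    exact h.symm
  have hbound : ((∑ k ∈ range (ℓ+1), n.choose k : ℕ) : ℝ) * (p ^ ℓ * (1-p) ^ (n - ℓ)) ≤ 1 := by
    push_cast
    rw [Finset.sum_mul]
    calc ∑ k ∈ range (ℓ+1), (n.choose k : ℝ) * (p ^ ℓ * (1-p) ^ (n-ℓ))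
        ≤ ∑ k ∈ range (ℓ+1), p ^ k * (1-p) ^ (n-k) * n.choose k := by
          apply Finset.sum_le_sum
          intro k hk
          have hkℓ : k ≤ ℓ := by simpa [Nat.lt_succ_iff] using hk
          have e1 : p ^ ℓ = p ^ k * p ^ (ℓ - k) := by rw [← pow_add]; congr 1; omega
          have e2 : (1-p) ^ (n-k) = (1-p)^(n-ℓ) * (1-p)^(ℓ-k) := by
            rw [← pow_add]; congr 1; omega
          have h3 : p ^ (ℓ-k) ≤ (1-p)^(ℓ-k) := pow_le_pow_left₀ hp0.le hple _
          have hnn : (0:ℝ) ≤ (n.choose k : ℝ) := by positivity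
          rw [e1, e2]
          have : p ^ k * p ^ (ℓ - k) * (1-p)^(n-ℓ) ≤ p ^ k * ((1-p)^(n-ℓ) * (1-p)^(ℓ-k)) := by
            have := mul_le_mul_of_nonneg_left h3 (pow_nonneg hp0.le k)
            nlinarith [pow_pos h1p (n-ℓ), pow_pos hp0 k, pow_nonneg hp0.le (ℓ-k)]
          nlinarith [pow_pos hp0 k, pow_pos h1p (n-ℓ), pow_pos h1p (ℓ-k)]
        _ ≤ ∑ k ∈ range (n+1), p ^ k * (1-p) ^ (n-k) * n.choose k := by
          apply Finset.sum_le_sum_of_subset_of_nonneg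
          · exact Finset.range_subset_range.2 (by omega)
          · intro i _ _; positivity
        _ = 1 := hbinom
  have hX : (0:ℝ) < p ^ ℓ * (1-p) ^ (n-ℓ) := by positivity
  have hS : ((∑ k ∈ range (ℓ+1), n.choose k : ℕ) : ℝ) ≤ (p ^ ℓ * (1-p) ^ (n-ℓ))⁻¹ := by
    rw [← one_div, le_div_iff₀ hX]
    exact hbound
  refine hS.trans (le_of_eq ?_)
  have hnp : (n:ℝ) * p = ℓ := by rw [hp]; field_simp [hn0.ne']
  have hn1p : (n:ℝ) * (1 - p) = ((n - ℓ : ℕ):ℝ) := by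
    have : ((n - ℓ : ℕ):ℝ) = (n:ℝ) - ℓ := by push_cast [hℓn]; ring
    rw [this, hp]; field_simp
  have hlog : (n:ℝ) * binEnt p = Real.logb 2 ((p ^ ℓ * (1-p) ^ (n-ℓ))⁻¹) := by
    rw [Real.logb_inv, Real.logb_mul (by positivity) (by positivity), Real.logb_pow,
      Real.logb_pow, binEnt]
    linear_combination (-(Real.logb 2 p)) * hnp + (-(Real.logb 2 (1-p))) * hn1p
  rw [hlog, Real.rpow_logb (by norm_num) (by norm_num) (by positivity)]

/-- Cardinality bound for Hamming balls. -/
lemma card_hamming_ball_le {α : Type*} [Fintype α] [DecidableEq α] [Nonempty α]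
    (n ℓ : ℕ) (x : Fin n → α) :
    (Finset.univ.filter fun y : Fin n → α => hammingDist x y ≤ ℓ).card ≤
      (∑ k ∈ Finset.range (ℓ + 1), n.choose k) * Fintype.card α ^ ℓ := by
  classical
  have hfib : ∀ s : Finset (Fin n), s.card ≤ ℓ →
      (Finset.univ.filter fun y : Fin n → α => ∀ i ∉ s, y i = x i).card ≤
        Fintype.card α ^ ℓ := by
    intro s hs
    have h1 : (Finset.univ.filter fun y : Fin n → α => ∀ i ∉ s, y i = x i).card ≤
        (Finset.univ : Finset (↥s → α)).card := by
      apply Finset.card_le_card_of_injOn (fun y (i : ↥s) => y i)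
      · intro y _; exact Finset.mem_univ _
      · intro y₁ h₁ y₂ h₂ hf
        simp only [coe_filter, Set.mem_setOf_eq, Finset.mem_univ, true_and] at h₁ h₂
        funext i
        by_cases hi : i ∈ s
        · exact congrFun hf ⟨i, hi⟩
        · rw [h₁ i hi, h₂ i hi]
    refine h1.trans ?_
    rw [Finset.card_univ, Fintype.card_fun, Fintype.card_coe]
    exact Nat.pow_le_pow_right Fintype.card_pos hs
  have hsub : (Finset.univ.filter fun y : Fin n → α => hammingDist x y ≤ ℓ) ⊆
      (Finset.range (ℓ+1)).biUnion (fun k =>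
        (Finset.univ.powersetCard k).biUnion (fun s =>
          Finset.univ.filter (fun y : Fin n → α => ∀ i ∉ s, y i = x i))) := by
    intro y hy
    simp only [Finset.mem_filter, Finset.mem_univ, true_and] at hy
    set s : Finset (Fin n) := Finset.univ.filter (fun i => x i ≠ y i) with hsdef
    have hcard : s.card = hammingDist x y := rfl
    refine Finset.mem_biUnion.2 ⟨s.card, Finset.mem_range.2 (by omega),
      Finset.mem_biUnion.2 ⟨s, Finset.mem_powersetCard.2 ⟨Finset.subset_univ _, rfl⟩, ?_⟩⟩
    simp only [Finset.mem_filter, Finset.mem_univ, true_and]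
    intro i hi
    simp only [hsdef, Finset.mem_filter, Finset.mem_univ, true_and, not_not] at hi
    exact hi.symm
  refine (Finset.card_le_card hsub).trans ?_
  refine (Finset.card_biUnion_le).trans ?_
  rw [Finset.sum_mul]
  apply Finset.sum_le_sum
  intro k hk
  refine (Finset.card_biUnion_le).trans ?_
  calc ∑ s ∈ Finset.univ.powersetCard k,
        (Finset.univ.filter fun y : Fin n → α => ∀ i ∉ s, y i = x i).card
      ≤ ∑ s ∈ Finset.univ.powersetCard k, Fintype.card α ^ ℓ := by
        apply Finset.sum_le_sum
        intro s hs
        apply hfib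
        have := (Finset.mem_powersetCard.1 hs).2
        have hk' := Finset.mem_range.1 hk
        omega
    _ = n.choose k * Fintype.card α ^ ℓ := by
        rw [Finset.sum_const, smul_eq_mul, Finset.card_powersetCard, Finset.card_univ,
          Fintype.card_fin]

/-- Basic facts about the minimum of a strictly positive pmf. -/
lemma iInf_facts {α : Type*} [Fintype α] [Nonempty α]
    (Q : α → ℝ) (hQ : IsPmf Q) (hQpos : ∀ a, 0 < Q a) :
    0 < (⨅ a, Q a) ∧ (∀ a, (⨅ a, Q a) ≤ Q a) ∧ (⨅ a, Q a) ≤ 1 := by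
  obtain ⟨a0, ha0⟩ := Finite.exists_min Q
  have hm_le : ∀ a, (⨅ a, Q a) ≤ Q a := fun a => ciInf_le (Finite.bddBelow_range _) a
  have hlow : Q a0 ≤ ⨅ a, Q a := le_ciInf ha0
  have hQ1 : ∀ a, Q a ≤ 1 := by
    intro a
    rw [← hQ.2]
    exact Finset.single_le_sum (fun b _ => (hQpos b).le) (Finset.mem_univ a)
  exact ⟨lt_of_lt_of_le (hQpos a0) hlow, hm_le, (hm_le a0).trans (hQ1 a0)⟩

/-- Pointwise comparison: if `y` is within Hamming distance `ℓ` of `x`, then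
`Q^{⊗n}(y) ≤ Q^{⊗n}(x) · (min Q)^{-ℓ}`. -/
lemma prodPmf_ball_le {α : Type*} [Fintype α] [DecidableEq α] [Nonempty α]
    (Q : α → ℝ) (hQ : IsPmf Q) (hQpos : ∀ a, 0 < Q a) (n ℓ : ℕ)
    {x y : Fin n → α} (h : hammingDist x y ≤ ℓ) :
    prodPmf Q n y ≤ prodPmf Q n x * ((⨅ a, Q a)⁻¹) ^ ℓ := by
  classical
  obtain ⟨hm_pos, hm_le, hm1⟩ := iInf_facts Q hQ hQpos
  set m := ⨅ a, Q a with hm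
  have hQ1 : ∀ a, Q a ≤ 1 := by
    intro a
    rw [← hQ.2]
    exact Finset.single_le_sum (fun b _ => (hQpos b).le) (Finset.mem_univ a)
  set s : Finset (Fin n) := Finset.univ.filter (fun i => x i ≠ y i) with hsdef
  have hsc : s.card ≤ ℓ := h
  have hsplit : ∀ z : Fin n → α,
      prodPmf Q n z = (∏ i ∈ Finset.univ \ s, Q (z i)) * ∏ i ∈ s, Q (z i) :=
    fun z => (Finset.prod_sdiff (Finset.subset_univ s)).symm
  have hinv1 : (1:ℝ) ≤ m⁻¹ := (one_le_inv_iff₀.2 ⟨hm_pos, hm1⟩ : (1:ℝ) ≤ m⁻¹)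
  have h2 : ∏ i ∈ s, Q (y i) ≤ (∏ i ∈ s, Q (x i)) * (m⁻¹) ^ s.card := by
    rw [← Finset.prod_const, ← Finset.prod_mul_distrib]
    apply Finset.prod_le_prod (fun i _ => (hQpos _).le)
    intro i _
    calc Q (y i) ≤ 1 := hQ1 _
      _ = m * m⁻¹ := by field_simp
      _ ≤ Q (x i) * m⁻¹ := by
          apply mul_le_mul_of_nonneg_right (hm_le _) (by positivity)
  have h4 : (m⁻¹) ^ s.card ≤ (m⁻¹) ^ ℓ := pow_le_pow_right₀ hinv1 hsc
  have hoff : ∏ i ∈ Finset.univ \ s, Q (y i) = ∏ i ∈ Finset.univ \ s, Q (x i) := by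
    apply Finset.prod_congr rfl
    intro i hi
    simp only [hsdef, Finset.mem_sdiff, Finset.mem_filter, Finset.mem_univ, true_and,
      not_not] at hi
    rw [hi]
  rw [hsplit y, hsplit x, hoff, mul_assoc]
  apply mul_le_mul_of_nonneg_left _ (Finset.prod_nonneg fun i _ => (hQpos _).le)
  refine h2.trans ?_
  exact mul_le_mul_of_nonneg_left h4 (Finset.prod_nonneg fun i _ => (hQpos _).le)

theorem blow_up_prob_le {α : Type*} [Fintype α] [DecidableEq α] [Nonempty α]
    (hcard : 2 ≤ Fintype.card α)
    (Q : α → ℝ) (hQ : IsPmf Q) (hQpos : ∀ a, 0 < Q a)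
    (n : ℕ) (hn : 1 ≤ n) (ℓ : ℕ) (hℓ : (ℓ : ℝ) ≤ (n : ℝ) / 2)
    (A : Finset (Fin n → α)) :
    ∑ y ∈ Finset.univ.filter (fun y : Fin n → α => ∃ x ∈ A, hammingDist x y ≤ ℓ),
        prodPmf Q n y ≤
      (∑ x ∈ A, prodPmf Q n x) * (2 : ℝ) ^ ((n : ℝ) * binEnt ((ℓ : ℝ) / n)) *
        (Fintype.card α : ℝ) ^ ℓ * (⨅ a, Q a) ^ (-(ℓ : ℤ)) := by
  classical
  obtain ⟨hm_pos, hm_le, hm1⟩ := iInf_facts Q hQ hQpos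
  set m := ⨅ a, Q a with hm
  have hQnn : ∀ z : Fin n → α, 0 ≤ prodPmf Q n z :=
    fun z => Finset.prod_nonneg fun i _ => (hQpos _).le
  have key1 : ∑ y ∈ Finset.univ.filter (fun y : Fin n → α => ∃ x ∈ A, hammingDist x y ≤ ℓ),
        prodPmf Q n y
      ≤ ∑ x ∈ A, ∑ y ∈ Finset.univ.filter (fun y : Fin n → α => hammingDist x y ≤ ℓ),
          prodPmf Q n y := by
    rw [Finset.sum_filter]
    have e : ∀ x ∈ A,
        (∑ y ∈ Finset.univ.filter (fun y : Fin n → α => hammingDist x y ≤ ℓ), prodPmf Q n y)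
          = ∑ y : Fin n → α, if hammingDist x y ≤ ℓ then prodPmf Q n y else 0 :=
      fun x _ => Finset.sum_filter _ _
    rw [Finset.sum_congr rfl e, Finset.sum_comm]
    apply Finset.sum_le_sum
    intro y _
    split_ifs with hx
    · obtain ⟨x, hxA, hxd⟩ := hx
      calc prodPmf Q n y = (if hammingDist x y ≤ ℓ then prodPmf Q n y else 0) :=
            (if_pos hxd).symm
        _ ≤ ∑ x' ∈ A, if hammingDist x' y ≤ ℓ then prodPmf Q n y else 0 :=
            Finset.single_le_sum
              (f := fun x' => if hammingDist x' y ≤ ℓ then prodPmf Q n y else 0)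
              (fun x' _ => by split_ifs; exacts [hQnn y, le_rfl]) hxA
    · exact Finset.sum_nonneg fun x' _ => by split_ifs; exacts [hQnn y, le_rfl]
  set C : ℝ := (2 : ℝ) ^ ((n : ℝ) * binEnt ((ℓ : ℝ) / n)) * (Fintype.card α : ℝ) ^ ℓ with hC
  have key2 : ∀ x : Fin n → α,
      ∑ y ∈ Finset.univ.filter (fun y : Fin n → α => hammingDist x y ≤ ℓ), prodPmf Q n y
        ≤ prodPmf Q n x * (m⁻¹) ^ ℓ * C := by
    intro x
    have h1 : ∑ y ∈ Finset.univ.filter (fun y : Fin n → α => hammingDist x y ≤ ℓ),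
          prodPmf Q n y
        ≤ (Finset.univ.filter (fun y : Fin n → α => hammingDist x y ≤ ℓ)).card •
            (prodPmf Q n x * (m⁻¹) ^ ℓ) :=
      Finset.sum_le_card_nsmul _ _ _
        (fun y hy => prodPmf_ball_le Q hQ hQpos n ℓ ((Finset.mem_filter.1 hy).2))
    rw [nsmul_eq_mul] at h1
    refine h1.trans ?_
    have hcb : (((Finset.univ.filter fun y : Fin n → α => hammingDist x y ≤ ℓ)).card : ℝ)
        ≤ C := by
      calc (((Finset.univ.filter fun y : Fin n → α => hammingDist x y ≤ ℓ)).card : ℝ)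
          ≤ (((∑ k ∈ Finset.range (ℓ + 1), n.choose k) * Fintype.card α ^ ℓ : ℕ) : ℝ) := by
            exact_mod_cast card_hamming_ball_le n ℓ x
        _ = ((∑ k ∈ Finset.range (ℓ + 1), n.choose k : ℕ) : ℝ) * (Fintype.card α : ℝ) ^ ℓ := by
            push_cast; ring
        _ ≤ C := by
            rw [hC]
            exact mul_le_mul_of_nonneg_right (sum_choose_le_two_rpow n ℓ hn hℓ) (by positivity)
    have hnn : (0:ℝ) ≤ prodPmf Q n x * (m⁻¹) ^ ℓ :=
      mul_nonneg (hQnn x) (by positivity)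
    calc (((Finset.univ.filter fun y : Fin n → α => hammingDist x y ≤ ℓ)).card : ℝ) *
          (prodPmf Q n x * (m⁻¹) ^ ℓ)
        ≤ C * (prodPmf Q n x * (m⁻¹) ^ ℓ) := mul_le_mul_of_nonneg_right hcb hnn
      _ = prodPmf Q n x * (m⁻¹) ^ ℓ * C := by ring
  refine key1.trans ?_
  refine (Finset.sum_le_sum fun x _ => key2 x).trans (le_of_eq ?_)
  have hz : m ^ (-(ℓ : ℤ)) = (m⁻¹) ^ ℓ := by
    rw [zpow_neg, zpow_natCast, inv_pow]
  rw [hz, hC, ← Finset.sum_mul, ← Finset.sum_mul]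
  ring
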